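/- Synchronous machine inductance derivative identity. For all θ ∈ ℝ, the 5×5 inductance matrix of a synchronous machine satisfies dL(θ)/dθ = 𝒿·L(θ) + L(θ)·𝒿ᵀ, where the derivative is taken entrywise. -/

import Mathlib

set_option maxHeartbeats 1000000


noncomputable section
open Matrix

/-- Vectors in ℝ². -/
abbrev V2 : Type := Fin 2 → ℝ
/-- 2×2 real matrices. -/
abbrev M2 : Type := Matrix (Fin 2) (Fin 2) ℝ

/-- The 90° rotation matrix `j`. -/
def j2 : M2 := !![0, -1; 1, 0]

/-- The rotation matrix `R(θ)`. -/
def Rot (θ : ℝ) : M2 := !![Real.cos θ, -Real.sin θ; Real.sin θ, Real.cos θ]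

/-- The unit vector `r(θ) = (cos θ, sin θ)`. -/
def rvec (θ : ℝ) : V2 := ![Real.cos θ, Real.sin θ]

/-- The Euclidean norm on ℝ². -/
def enorm2 (w : V2) : ℝ := Real.sqrt (w 0 ^ 2 + w 1 ^ 2)
/-- Index type for the 5 machine windings: 2 stator + 3 rotor (f, d, q). -/
abbrev I5 : Type := Fin 2 ⊕ Fin 3
/-- Vectors in ℝ⁵ (machine currents/voltages). -/
abbrev V5 : Type := I5 → ℝ

/-- The 5×5 matrix 𝒿 = diag(j, 0₃ₓ₃). -/
def jj : Matrix I5 I5 ℝ := Matrix.fromBlocks j2 0 0 0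

/-- Parameters of a synchronous machine. -/
structure Machine where
  /-- stator winding resistance -/
  rs : ℝ
  /-- excitation winding resistance -/
  rf : ℝ
  /-- d-axis damper winding resistance -/
  rd : ℝ
  /-- q-axis damper winding resistance -/
  rq : ℝ
  /-- stator winding inductance -/
  ls : ℝ
  /-- rotor saliency -/
  lsa : ℝ
  /-- excitation winding inductance -/
  lf : ℝ
  /-- d-axis damper winding inductance -/
  ld : ℝ
  /-- q-axis damper winding inductance -/
  lq : ℝ
  /-- mutual inductance of excitation and damper winding -/
  lfd : ℝ
  /-- stator–excitation mutual inductance -/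
  lsf : ℝ
  /-- stator–d-damper mutual inductance -/
  lsd : ℝ
  /-- stator–q-damper mutual inductance -/
  lsq : ℝ
  /-- rotor inertia -/
  m : ℝ
  /-- rotor damping -/
  d : ℝ
  rs_pos : 0 < rs
  rf_pos : 0 < rf
  rd_pos : 0 < rd
  rq_pos : 0 < rq
  ls_pos : 0 < ls
  lsa_nonneg : 0 ≤ lsa
  lf_pos : 0 < lf
  ld_pos : 0 < ld
  lq_pos : 0 < lq
  lfd_pos : 0 < lfd
  lsf_pos : 0 < lsf
  lsd_pos : 0 < lsd
  lsq_pos : 0 < lsq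
  m_pos : 0 < m
  d_pos : 0 < d

namespace Machine

/-- Stator inductance matrix L_s(θ). -/
def Ls (mc : Machine) (θ : ℝ) : M2 :=
  mc.ls • (1 : M2) + Rot (2 * θ) * !![mc.lsa, 0; 0, -mc.lsa]

/-- Mutual inductance matrix L_m(θ). -/
def Lm (mc : Machine) (θ : ℝ) : Matrix (Fin 2) (Fin 3) ℝ :=
  Rot θ * !![mc.lsf, mc.lsd, 0; 0, 0, -mc.lsq]

/-- Rotor inductance matrix L_r. -/
def Lr (mc : Machine) : Matrix (Fin 3) (Fin 3) ℝ :=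
  !![mc.lf, mc.lfd, 0; mc.lfd, mc.ld, 0; 0, 0, mc.lq]

/-- The 5×5 machine inductance matrix L(θ). -/
def Lmat (mc : Machine) (θ : ℝ) : Matrix I5 I5 ℝ :=
  Matrix.fromBlocks (mc.Ls θ) (mc.Lm θ) (mc.Lm θ)ᵀ mc.Lr

/-- The 5×5 machine resistance matrix R = diag(r_s I₂, r_f, r_d, r_q). -/
def Rmat (mc : Machine) : Matrix I5 I5 ℝ :=
  Matrix.fromBlocks (mc.rs • (1 : M2)) 0 0 (Matrix.diagonal ![mc.rf, mc.rd, mc.rq])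

/-- Electrical torque τ_e = ½ iᵀ(L(θ)𝒿 + 𝒿ᵀL(θ))i. -/
def torque (mc : Machine) (θ : ℝ) (i : V5) : ℝ :=
  (1 / 2) * (i ⬝ᵥ ((mc.Lmat θ * jj + jjᵀ * mc.Lmat θ) *ᵥ i))

/-- Induced voltage v_ind = ω(L(θ)𝒿ᵀ + 𝒿L(θ))i. -/
def vind (mc : Machine) (ω θ : ℝ) (i : V5) : V5 :=
  ω • ((mc.Lmat θ * jjᵀ + jj * mc.Lmat θ) *ᵥ i)

/-- Stator impedance Z_s(θ) = r_s I₂ + ω₀ j L_s(θ). -/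
def Zs (mc : Machine) (ω0 θ : ℝ) : M2 :=
  mc.rs • (1 : M2) + ω0 • (j2 * mc.Ls θ)

/-- The open-circuit stator voltage error ν(θ) = v − Z_s(θ) i_s. -/
def nu (mc : Machine) (ω0 θ : ℝ) (v is : V2) : V2 :=
  v - mc.Zs ω0 θ *ᵥ is

end Machine

/-- Synchronous machine inductance derivative identity:
for all θ, dL(θ)/dθ = 𝒿 L(θ) + L(θ) 𝒿ᵀ, entrywise. -/
theorem inductance_derivative (mc : Machine) (θ : ℝ) (a b : I5) :
    HasDerivAt (fun φ => mc.Lmat φ a b)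
      ((jj * mc.Lmat θ + mc.Lmat θ * jjᵀ) a b) θ := by
  have h1 : ∀ c : ℝ, HasDerivAt (fun φ : ℝ => Real.cos φ * c) (-Real.sin θ * c) θ :=
    fun c => (Real.hasDerivAt_cos θ).mul_const c
  have h2 : ∀ c : ℝ, HasDerivAt (fun φ : ℝ => Real.sin φ * c) (Real.cos θ * c) θ :=
    fun c => (Real.hasDerivAt_sin θ).mul_const c
  have h3 : ∀ c : ℝ, HasDerivAt (fun φ : ℝ => Real.cos (2 * φ) * c)
      (-Real.sin (2 * θ) * (2 * 1) * c) θ :=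
    fun c => (((hasDerivAt_id θ).const_mul 2).cos).mul_const c
  have h4 : ∀ c : ℝ, HasDerivAt (fun φ : ℝ => Real.sin (2 * φ) * c)
      (Real.cos (2 * θ) * (2 * 1) * c) θ :=
    fun c => (((hasDerivAt_id θ).const_mul 2).sin).mul_const c
  rcases a with a | a <;> rcases b with b | b <;> fin_cases a <;> fin_cases b <;>
    · simp [Machine.Lmat, Machine.Ls, Machine.Lm, Machine.Lr, jj, j2, Rot,
        Matrix.mul_apply, Fin.sum_univ_succ, Matrix.one_apply, Matrix.vecHead, Matrix.vecTail]
      first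
      | exact hasDerivAt_const _ _
      | exact ((h4 mc.lsa).congr_deriv (by ring))
      | exact (((h3 mc.lsa).const_add mc.ls).congr_deriv (by ring))
      | exact ((((h3 mc.lsa).neg).const_add mc.ls).congr_deriv (by ring))
      | exact ((h1 mc.lsf).congr_deriv (by ring))
      | exact ((h1 mc.lsd).congr_deriv (by ring))
      | exact ((h2 mc.lsf).congr_deriv (by ring))
      | exact ((h2 mc.lsd).congr_deriv (by ring))
      | exact ((h2 mc.lsq).congr_deriv (by ring))
      | exact (((h1 mc.lsq).neg).congr_deriv (by ring))
      | exact ((h3 mc.lsa).congr_deriv (by ring))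
      | exact (((h3 mc.lsa).neg).congr_deriv (by ring))
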